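/- Let p be an odd prime and k ≥ 2, and fix z₁ with gcd(z₁,p)=1. For even ℓ with 0 < ℓ < k and x̃ with x̃ ≡ z₁² (mod p), gcd(x̃,p)=1, the system ỹ² ≡ x̃ (mod p^(k−ℓ)), ỹ ≡ z₁ (mod p), has exactly p^(ℓ/2) solutions ỹ modulo p^(k−ℓ/2). -/

import Mathlib

lemma hensel_sq (p : ℕ) (hp : p.Prime) (hodd : Odd p) (x z : ℤ)
    (hz : ¬ (p:ℤ) ∣ z) (hxz : (p:ℤ) ∣ x - z^2) :
    ∀ m : ℕ, ∃ y : ℤ, (p:ℤ)^(m+1) ∣ y^2 - x ∧ (p:ℤ) ∣ y - z := by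
  have hpI : Prime (p:ℤ) := Nat.prime_iff_prime_int.mp hp
  intro m
  induction m with
  | zero =>
    refine ⟨z, ?_, by simp⟩
    rw [pow_one]
    have h : z^2 - x = -(x - z^2) := by ring
    rw [h]; exact dvd_neg.mpr hxz
  | succ m ih =>
    obtain ⟨y, ⟨c, hc⟩, hyz⟩ := ih
    have hcop : IsCoprime ((p:ℤ)) (2*y) := by
      rw [Prime.coprime_iff_not_dvd hpI]
      intro h
      rcases (hpI.dvd_mul).mp h with h2 | hy
      · have h2' : (p:ℤ) ∣ ((2:ℕ):ℤ) := by exact_mod_cast h2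
        have hp2 : p ∣ 2 := Int.natCast_dvd_natCast.mp h2'
        have := (Nat.prime_dvd_prime_iff_eq hp Nat.prime_two).mp hp2
        rcases hodd with ⟨t, ht⟩; omega
      · have : (p:ℤ) ∣ y - (y - z) := dvd_sub hy hyz
        simp only [sub_sub_cancel] at this
        exact hz this
    obtain ⟨v, u, huv⟩ := hcop
    refine ⟨y - (c*u)*(p:ℤ)^(m+1), ⟨c*v + (c*u)^2*(p:ℤ)^m, ?_⟩, ?_⟩
    · linear_combination hc - c*(p:ℤ)^(m+1) * huv
    · have h2 : y - (c*u)*(p:ℤ)^(m+1) - z = (y - z) - (c*u)*(p:ℤ)^(m+1) := by ring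
      rw [h2]
      exact dvd_sub hyz ((dvd_pow_self (p:ℤ) (Nat.succ_ne_zero m)).mul_left (c*u))

lemma count_mod (a b r : ℕ) (ha : 0 < a) (hr : r < a) :
    ((Finset.range (a*b)).filter (fun y => y % a = r)).card = b := by
  have hc : ((Finset.range (a*b)).filter (fun y => y % a = r)).card = (Finset.range b).card := by
    apply Finset.card_bij' (fun y _ => y / a) (fun t _ => r + t * a)
    · intro y hy
      simp only [Finset.mem_filter, Finset.mem_range] at hy ⊢
      exact Nat.div_lt_of_lt_mul hy.1
    · intro t ht
      simp only [Finset.mem_range] at ht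
      simp only [Finset.mem_filter, Finset.mem_range]
      refine ⟨?_, by simp [Nat.add_mul_mod_self_right, Nat.mod_eq_of_lt hr]⟩
      calc r + t * a < a + t * a := by omega
        _ = (t+1) * a := by ring
        _ ≤ b * a := Nat.mul_le_mul_right a ht
        _ = a * b := mul_comm _ _
    · intro y hy
      simp only [Finset.mem_filter] at hy
      have h := Nat.mod_add_div y a
      rw [hy.2, Nat.mul_comm a (y/a)] at h
      omega
    · intro t ht
      rw [Nat.add_mul_div_right _ _ ha, Nat.div_eq_of_lt hr, zero_add]
  rw [hc, Finset.card_range]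

theorem stmt_11 (p k ℓ z₁ xt : ℕ) (hp : p.Prime) (hodd : Odd p) (hk : 2 ≤ k)
    (hleven : Even ℓ) (hl : 0 < ℓ) (hlk : ℓ < k)
    (hz : Nat.gcd z₁ p = 1) (hxz : xt % p = z₁ ^ 2 % p) (hx : Nat.gcd xt p = 1) :
    ((Finset.range (p ^ (k - ℓ / 2))).filter
      (fun y => y ^ 2 % p ^ (k - ℓ) = xt % p ^ (k - ℓ) ∧ y % p = z₁ % p)).card
      = p ^ (ℓ / 2) := by
  have hp1 : 1 < p := hp.one_lt
  set s := ℓ / 2 with hs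
  set m := k - ℓ with hm
  have hℓ : ℓ = 2 * s := by obtain ⟨t, ht⟩ := hleven; omega
  have hm1 : 1 ≤ m := by omega
  have hn : k - s = m + s := by omega
  have hpI : Prime (p:ℤ) := Nat.prime_iff_prime_int.mp hp
  have hpmpos : 0 < p ^ m := Nat.pow_pos (by omega)
  -- p does not divide z₁
  have hpz₁ : ¬ p ∣ z₁ := by
    intro h
    have : p ∣ Nat.gcd z₁ p := Nat.dvd_gcd h dvd_rfl
    rw [hz] at this
    exact absurd (Nat.le_of_dvd one_pos this) (by omega)
  have hpz : ¬ (p:ℤ) ∣ (z₁:ℤ) := by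
    rw [Int.natCast_dvd_natCast]; exact hpz₁
  -- p ∤ 2 z₁ style fact
  have hp2 : ¬ p ∣ 2 := by
    intro h
    have := (Nat.prime_dvd_prime_iff_eq hp Nat.prime_two).mp h
    rcases hodd with ⟨t, ht⟩; omega
  have hxz' : (p:ℤ) ∣ (xt:ℤ) - (z₁:ℤ)^2 := by
    have h1 : xt ≡ z₁^2 [MOD p] := hxz
    have h2 : (xt:ℤ) ≡ ((z₁^2 : ℕ) : ℤ) [ZMOD (p:ℕ)] := Int.natCast_modEq_iff.mpr h1
    have := Int.ModEq.dvd h2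
    push_cast at this ⊢
    have h3 : (xt:ℤ) - (z₁:ℤ)^2 = -((z₁:ℤ)^2 - xt) := by ring
    rw [h3]; exact dvd_neg.mpr this
  obtain ⟨y, hy2, hyz⟩ := hensel_sq p hp hodd (xt:ℤ) (z₁:ℤ) hpz hxz' (m-1)
  rw [Nat.sub_add_cancel hm1] at hy2
  set y₀ : ℕ := (y % (p:ℤ)^m).toNat with hy₀
  have hy₀cast : (y₀ : ℤ) = y % (p:ℤ)^m :=
    Int.toNat_of_nonneg (Int.emod_nonneg y (by positivity))
  have hy₀lt : y₀ < p ^ m := by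
    have := Int.emod_lt_of_pos y (b := (p:ℤ)^m) (by positivity)
    rw [← hy₀cast] at this
    exact_mod_cast this
  have hy₀m : (y₀ : ℤ) ≡ y [ZMOD (p:ℤ)^m] := by
    rw [Int.ModEq, hy₀cast, Int.emod_emod_of_dvd _ dvd_rfl]
  have hy₀p : (y₀ : ℤ) ≡ (z₁:ℤ) [ZMOD (p:ℤ)] := by
    have h1 : (y₀ : ℤ) ≡ y [ZMOD (p:ℤ)] := hy₀m.of_dvd (dvd_pow_self _ (by omega : m ≠ 0))
    have h2 : y ≡ (z₁:ℤ) [ZMOD (p:ℤ)] := (Int.modEq_iff_dvd.mpr (by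
      have h : (z₁:ℤ) - y = -(y - z₁) := by ring
      rw [h]; exact dvd_neg.mpr hyz))
    exact h1.trans h2
  have hy₀sq : (y₀ : ℤ)^2 ≡ (xt:ℤ) [ZMOD (p:ℤ)^m] := by
    have h1 : (y₀:ℤ)^2 ≡ y^2 [ZMOD (p:ℤ)^m] := hy₀m.pow 2
    have h2 : y^2 ≡ (xt:ℤ) [ZMOD (p:ℤ)^m] := Int.modEq_iff_dvd.mpr (by
      have h : (xt:ℤ) - y^2 = -(y^2 - xt) := by ring
      rw [h]; exact dvd_neg.mpr hy2)
    exact h1.trans h2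
  -- nat versions
  have hA : y₀^2 % p^m = xt % p^m := by
    have : ((y₀^2 : ℕ) : ℤ) ≡ ((xt : ℕ) : ℤ) [ZMOD ((p^m : ℕ) : ℤ)] := by
      push_cast; exact hy₀sq
    exact Int.natCast_modEq_iff.mp this
  have hB : y₀ % p = z₁ % p := by
    have : ((y₀ : ℕ) : ℤ) ≡ ((z₁ : ℕ) : ℤ) [ZMOD ((p : ℕ) : ℤ)] := by
      push_cast; exact hy₀p
    exact Int.natCast_modEq_iff.mp this
  -- key equivalence
  have key : ∀ w ∈ Finset.range (p ^ (k - s)),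
      ((w ^ 2 % p ^ m = xt % p ^ m ∧ w % p = z₁ % p) ↔ w % p ^ m = y₀) := by
    intro w _
    constructor
    · rintro ⟨h1, h2⟩
      -- integer congruence
      have hw2 : (w:ℤ)^2 ≡ (y₀:ℤ)^2 [ZMOD (p:ℤ)^m] := by
        have hh : ((w^2 : ℕ) : ℤ) ≡ ((y₀^2 : ℕ) : ℤ) [ZMOD ((p^m : ℕ) : ℤ)] :=
          Int.natCast_modEq_iff.mpr (h1.trans hA.symm)
        push_cast at hh; exact hh
      have hdvd : (p:ℤ)^m ∣ ((w:ℤ) - y₀) * ((w:ℤ) + y₀) := by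
        have := hw2.dvd
        have h : (y₀:ℤ)^2 - (w:ℤ)^2 = -(((w:ℤ) - y₀) * ((w:ℤ) + y₀)) := by ring
        rw [h] at this
        exact (dvd_neg.mp this)
      have hwp : (w:ℤ) ≡ (z₁:ℤ) [ZMOD (p:ℤ)] := by
        have hh : ((w : ℕ) : ℤ) ≡ ((z₁ : ℕ) : ℤ) [ZMOD ((p : ℕ) : ℤ)] :=
          Int.natCast_modEq_iff.mpr h2
        exact hh
      have hsum : ¬ (p:ℤ) ∣ ((w:ℤ) + y₀) := by
        intro hd
        have hcong : (w:ℤ) + y₀ ≡ (z₁:ℤ) + z₁ [ZMOD (p:ℤ)] := hwp.add hy₀p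
        have hd2 : (p:ℤ) ∣ ((z₁:ℤ) + z₁) := by
          have h3 := Int.ModEq.dvd hcong
          have h4 : (z₁:ℤ) + z₁ = ((w:ℤ) + y₀) - (((w:ℤ) + y₀) - ((z₁:ℤ) + z₁)) := by ring
          rw [h4]
          exact dvd_sub hd (by
            have h5 : ((w:ℤ) + y₀) - ((z₁:ℤ) + z₁) = -((((z₁:ℤ) + z₁)) - ((w:ℤ) + y₀)) := by ring
            rw [h5]; exact dvd_neg.mpr h3)
        have hd3 : (p:ℤ) ∣ 2 * (z₁:ℤ) := by
          have h6 : (2 : ℤ) * z₁ = (z₁:ℤ) + z₁ := by ring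
          rw [h6]; exact hd2
        rcases hpI.dvd_mul.mp hd3 with h7 | h7
        · have h8 : (p:ℤ) ∣ ((2:ℕ):ℤ) := by exact_mod_cast h7
          exact hp2 (Int.natCast_dvd_natCast.mp h8)
        · exact hpz h7
      have hcop : IsCoprime ((p:ℤ)^m) ((w:ℤ) + y₀) :=
        ((Prime.coprime_iff_not_dvd hpI).mpr hsum).pow_left
      have hdvd' : (p:ℤ)^m ∣ (w:ℤ) - y₀ := hcop.dvd_of_dvd_mul_right hdvd
      have hmod : (w : ℕ) ≡ y₀ [MOD p^m] := by
        have h9 : ((w:ℕ):ℤ) ≡ ((y₀:ℕ):ℤ) [ZMOD ((p^m : ℕ):ℤ)] := by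
          have := (Int.modEq_iff_dvd.mpr (by
            have h10 : (w:ℤ) - y₀ = -(((y₀:ℤ)) - w) := by ring
            rw [h10] at hdvd'
            exact dvd_neg.mp hdvd' : ((p:ℤ))^m ∣ ((y₀:ℤ)) - w))
          push_cast
          exact this
        exact Int.natCast_modEq_iff.mp h9
      rw [Nat.ModEq] at hmod
      rw [hmod, Nat.mod_eq_of_lt hy₀lt]
    · intro h
      constructor
      · rw [Nat.pow_mod, h]; exact hA
      · rw [← Nat.mod_mod_of_dvd w (dvd_pow_self p (by omega : m ≠ 0)), h, hB]
  rw [Finset.filter_congr key, hn, pow_add]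
  exact count_mod (p^m) (p^s) y₀ hpmpos hy₀lt
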